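/- If Λ ⊆ ℝ^n is a full-rank lattice, V = ⋃_{i=1}^k (v_i + Λ) with pairwise distinct cosets, and D₁, D₂ ⊆ ℝ^n are bounded measurable sets with vol(D₁) + vol(D₂) > det(Λ)/k such that every translate of D₁ and of D₂ contains at most one point of V, then (D₁ − D₂) + (V − V) = ℝ^n. -/

import Mathlib

open MeasureTheory Set Pointwise Submodule

/-- The full-rank lattice `B·ℤⁿ` determined by an invertible matrix `B`. -/
def latticeOf {n : ℕ} (B : Matrix (Fin n) (Fin n) ℝ) : Set (Fin n → ℝ) :=
  {x | ∃ m : Fin n → ℤ, x = B.mulVec (fun i => (m i : ℝ))}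

noncomputable def bOf {n : ℕ} (B : Matrix (Fin n) (Fin n) ℝ) (hB : B.det ≠ 0) :
    Module.Basis (Fin n) ℝ (Fin n → ℝ) :=
  (Pi.basisFun ℝ (Fin n)).map (B.toLinearEquiv' (B.invertibleOfIsUnitDet (isUnit_iff_ne_zero.mpr hB)))

lemma bOf_apply {n : ℕ} (B : Matrix (Fin n) (Fin n) ℝ) (hB : B.det ≠ 0) (i : Fin n) :
    bOf B hB i = B.mulVec (Pi.single i 1) := by
  simp [bOf, Matrix.toLinearEquiv', Matrix.toLin'_apply]

lemma bOf_sum {n : ℕ} (B : Matrix (Fin n) (Fin n) ℝ) (hB : B.det ≠ 0) (c : Fin n → ℤ) :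
    ∑ i, c i • bOf B hB i = B.mulVec (fun i => (c i : ℝ)) := by
  funext j
  rw [Finset.sum_apply]
  simp only [Pi.smul_apply, bOf_apply, Matrix.mulVec, dotProduct]
  refine Finset.sum_congr rfl fun i _ => ?_
  rw [zsmul_eq_mul]
  have h1 : ∑ l, B j l * (Pi.single i 1 : Fin n → ℝ) l = B j i := by
    simp [Pi.single_apply, Finset.sum_ite_eq']
  rw [h1, mul_comm]

lemma latticeOf_eq {n : ℕ} (B : Matrix (Fin n) (Fin n) ℝ) (hB : B.det ≠ 0) :
    (span ℤ (Set.range ⇑(bOf B hB)) : Set (Fin n → ℝ)) = latticeOf B := by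
  ext x
  rw [SetLike.mem_coe, mem_span_range_iff_exists_fun]
  constructor
  · rintro ⟨c, rfl⟩
    exact ⟨c, bOf_sum B hB c⟩
  · rintro ⟨m, rfl⟩
    exact ⟨m, bOf_sum B hB m⟩

lemma latticeOf_countable {n : ℕ} (B : Matrix (Fin n) (Fin n) ℝ) :
    (latticeOf B).Countable := by
  have h : latticeOf B ⊆ Set.range (fun m : Fin n → ℤ => B.mulVec fun i => (m i : ℝ)) := by
    rintro x ⟨m, hm⟩; exact ⟨m, hm.symm⟩
  exact (Set.countable_range _).mono h

lemma vol_fd {n : ℕ} (B : Matrix (Fin n) (Fin n) ℝ) (hB : B.det ≠ 0) :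
    volume (ZSpan.fundamentalDomain (bOf B hB)) = ENNReal.ofReal |B.det| := by
  rw [ZSpan.volume_fundamentalDomain]
  congr 2
  rw [← Matrix.det_transpose B]
  congr 1
  ext i j
  rw [Matrix.of_apply, bOf_apply, Matrix.transpose_apply]
  change (B.mulVec (Pi.single i 1)) j = B j i
  simp [Matrix.mulVec, dotProduct, Pi.single_apply, Finset.sum_ite_eq']

lemma aux_inj {n : ℕ} {D V : Set (Fin n → ℝ)}
    (hfew : ∀ z : Fin n → ℝ, (((fun x => z + x) '' D) ∩ V).encard ≤ 1)
    {d d' p q : Fin n → ℝ} (hd : d ∈ D) (hd' : d' ∈ D) (hp : p ∈ V) (hq : q ∈ V)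
    (h : d + p = d' + q) : d = d' ∧ p = q := by
  have h1 : (q - d) + d ∈ ((fun x => (q - d) + x) '' D) ∩ V := by
    refine ⟨⟨d, hd, rfl⟩, ?_⟩
    have e : (q - d) + d = q := by abel
    rw [e]; exact hq
  have h2 : (q - d) + d' ∈ ((fun x => (q - d) + x) '' D) ∩ V := by
    refine ⟨⟨d', hd', rfl⟩, ?_⟩
    have e : (q - d) + d' = p := by
      have hp' : p = d' + q - d := by rw [← h]; abel
      rw [hp']; abel
    rw [e]; exact hp
  have heq := (Set.encard_le_one_iff.mp (hfew (q - d))) _ _ h2 h1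
  have hdd : d' = d := add_left_cancel heq
  subst hdd
  exact ⟨rfl, add_left_cancel h⟩

lemma aux_count {n k : ℕ} (B : Matrix (Fin n) (Fin n) ℝ) (hB : B.det ≠ 0)
    (v : Fin k → (Fin n → ℝ)) (V D : Set (Fin n → ℝ)) (hD : MeasurableSet D)
    (c : Fin n → ℝ)
    (hmemV : ∀ (i : Fin k) (g : (span ℤ (Set.range ⇑(bOf B hB))).toAddSubgroup),
      v i + ↑g ∈ V)
    (hinj : ∀ d d' p q : Fin n → ℝ, d ∈ D → d' ∈ D → p ∈ V → q ∈ V →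
      d + p = d' + q → d = d' ∧ p = q)
    (hne : ∀ (i j : Fin k), i ≠ j → ∀ g g' : (span ℤ (Set.range ⇑(bOf B hB))).toAddSubgroup,
      v i + ↑g ≠ v j + ↑g') :
    volume ((⋃ (i : Fin k), ⋃ (g : (span ℤ (Set.range ⇑(bOf B hB))).toAddSubgroup),
        g +ᵥ ((v i + c) +ᵥ D)) ∩ ZSpan.fundamentalDomain (bOf B hB)) = k * volume D := by
  set L := (span ℤ (Set.range ⇑(bOf B hB))).toAddSubgroup with hL
  set F := ZSpan.fundamentalDomain (bOf B hB) with hF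
  haveI hcnt : Countable L := by
    have h1 : Set.Countable (L : Set (Fin n → ℝ)) := by
      have : (L : Set (Fin n → ℝ)) = latticeOf B := latticeOf_eq B hB
      rw [this]; exact latticeOf_countable B
    exact h1.to_subtype
  have hmem : ∀ (i : Fin k) (g : L) (y : Fin n → ℝ),
      y ∈ g +ᵥ ((v i + c) +ᵥ D) ↔ ∃ d ∈ D, (↑g : Fin n → ℝ) + ((v i + c) + d) = y := by
    intro i g y
    constructor
    · rintro ⟨z, ⟨d, hd, rfl⟩, rfl⟩
      exact ⟨d, hd, rfl⟩
    · rintro ⟨d, hd, rfl⟩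
      exact ⟨(v i + c) + d, ⟨d, hd, rfl⟩, rfl⟩
  have hdisj : ∀ (i j : Fin k) (g g' : L), (i ≠ j ∨ g ≠ g') →
      Disjoint (g +ᵥ ((v i + c) +ᵥ D)) (g' +ᵥ ((v j + c) +ᵥ D)) := by
    intro i j g g' hne'
    rw [Set.disjoint_left]
    intro y hy hy'
    obtain ⟨d, hd, hyd⟩ := (hmem i g y).mp hy
    obtain ⟨d', hd', hyd'⟩ := (hmem j g' y).mp hy'
    have key : d + (v i + ↑g) = d' + (v j + ↑g') := by
      have e : (↑g : Fin n → ℝ) + ((v i + c) + d) = ↑g' + ((v j + c) + d') := by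
        rw [hyd, hyd']
      calc d + (v i + ↑g) = (↑g + ((v i + c) + d)) - c := by abel
        _ = (↑g' + ((v j + c) + d')) - c := by rw [e]
        _ = d' + (v j + ↑g') := by abel
    obtain ⟨hdd, hpq⟩ := hinj d d' _ _ hd hd' (hmemV i g) (hmemV j g') key
    rcases hne' with hij | hgg
    · exact hne i j hij g g' hpq
    · apply hgg
      have hij : i = j := by
        by_contra hij
        exact hne i j hij g g' hpq
      subst hij
      exact Subtype.coe_injective (add_left_cancel hpq)
  have hpieceM : ∀ (i : Fin k) (g : L), MeasurableSet (g +ᵥ ((v i + c) +ᵥ D)) := by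
    intro i g
    exact ((hD.const_vadd (v i + c)).const_vadd (↑g : Fin n → ℝ))
  rw [Set.iUnion_inter]
  have hsimp : ∀ i : Fin k, (⋃ (g : L), g +ᵥ ((v i + c) +ᵥ D)) ∩ F
      = ⋃ (g : L), ((g +ᵥ ((v i + c) +ᵥ D)) ∩ F) := fun i => Set.iUnion_inter _ _
  simp_rw [hsimp]
  rw [measure_iUnion ?_ ?_]
  · have hone : ∀ i : Fin k, volume (⋃ (g : L), ((g +ᵥ ((v i + c) +ᵥ D)) ∩ F)) = volume D := by
      intro i
      rw [measure_iUnion ?_ ?_]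
      · rw [← (ZSpan.isAddFundamentalDomain' (bOf B hB) volume).measure_eq_tsum ((v i + c) +ᵥ D)]
        exact measure_vadd volume _ _
      · intro g g' hgg
        exact (hdisj i i g g' (Or.inr hgg)).mono Set.inter_subset_left Set.inter_subset_left
      · intro g
        exact (hpieceM i g).inter (ZSpan.fundamentalDomain_measurableSet (bOf B hB))
    simp_rw [hone]
    rw [tsum_fintype]
    simp [Finset.sum_const, nsmul_eq_mul]
  · intro i j hij
    simp only [Function.onFun]
    rw [Set.disjoint_iUnion_left]
    intro g
    rw [Set.disjoint_iUnion_right]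
    intro g'
    exact (hdisj i j g g' (Or.inl hij)).mono Set.inter_subset_left Set.inter_subset_left
  · intro i
    exact MeasurableSet.iUnion fun g =>
      (hpieceM i g).inter (ZSpan.fundamentalDomain_measurableSet (bOf B hB))

/-- The `ℓ = 1` case of the inhomogeneous covering theorem:
`(D₁ - D₂) + (V - V)` covers `ℝⁿ`. -/
theorem stmt_18 {n k : ℕ} (hk : 0 < k) (B : Matrix (Fin n) (Fin n) ℝ) (hB : B.det ≠ 0)
    (v : Fin k → (Fin n → ℝ))
    (hv : ∀ i j : Fin k, i ≠ j → v i - v j ∉ latticeOf B)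
    (V : Set (Fin n → ℝ)) (hV : V = ⋃ i : Fin k, (fun w => v i + w) '' latticeOf B)
    (D₁ D₂ : Set (Fin n → ℝ))
    (hD₁b : Bornology.IsBounded D₁) (hD₁m : MeasurableSet D₁)
    (hD₂b : Bornology.IsBounded D₂) (hD₂m : MeasurableSet D₂)
    (hvol : |B.det| / k < (volume D₁).toReal + (volume D₂).toReal)
    (hfew₁ : ∀ z : Fin n → ℝ, (((fun x => z + x) '' D₁) ∩ V).encard ≤ 1)
    (hfew₂ : ∀ z : Fin n → ℝ, (((fun x => z + x) '' D₂) ∩ V).encard ≤ 1) :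
    (D₁ - D₂) + (V - V) = Set.univ := by
  apply Set.eq_univ_of_forall
  intro x
  set L := (span ℤ (Set.range ⇑(bOf B hB))).toAddSubgroup with hLdef
  set F := ZSpan.fundamentalDomain (bOf B hB) with hFdef
  haveI hcnt : Countable L := by
    have h1 : Set.Countable (L : Set (Fin n → ℝ)) := by
      have : (L : Set (Fin n → ℝ)) = latticeOf B := latticeOf_eq B hB
      rw [this]; exact latticeOf_countable B
    exact h1.to_subtype
  have hmemV : ∀ (i : Fin k) (g : L), v i + ↑g ∈ V := by
    intro i g
    rw [hV]
    refine Set.mem_iUnion.mpr ⟨i, ⟨↑g, ?_, rfl⟩⟩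
    rw [← latticeOf_eq B hB]
    exact g.2
  have hne : ∀ (i j : Fin k), i ≠ j → ∀ g g' : L, v i + ↑g ≠ v j + ↑g' := by
    intro i j hij g g' h
    apply hv i j hij
    rw [← latticeOf_eq B hB]
    have e : v i - v j = (↑g' : Fin n → ℝ) - ↑g := by
      calc v i - v j = (v j + ↑g') - ↑g - v j := by rw [← h]; abel
        _ = ↑g' - ↑g := by abel
    rw [e]
    exact sub_mem g'.2 g.2
  have hinj₁ : ∀ d d' p q : Fin n → ℝ, d ∈ D₁ → d' ∈ D₁ → p ∈ V → q ∈ V →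
      d + p = d' + q → d = d' ∧ p = q := fun d d' p q hd hd' hp hq h =>
    aux_inj hfew₁ hd hd' hp hq h
  have hinj₂ : ∀ d d' p q : Fin n → ℝ, d ∈ D₂ → d' ∈ D₂ → p ∈ V → q ∈ V →
      d + p = d' + q → d = d' ∧ p = q := fun d d' p q hd hd' hp hq h =>
    aux_inj hfew₂ hd hd' hp hq h
  have h1 := aux_count B hB v V D₁ hD₁m 0 hmemV hinj₁ hne
  have h2 := aux_count B hB v V D₂ hD₂m x hmemV hinj₂ hne
  set A₁ := (⋃ (i : Fin k), ⋃ (g : L), g +ᵥ ((v i + 0) +ᵥ D₁)) ∩ F with hA₁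
  set A₂ := (⋃ (i : Fin k), ⋃ (g : L), g +ᵥ ((v i + x) +ᵥ D₂)) ∩ F with hA₂
  have hA₂m : MeasurableSet A₂ := by
    refine MeasurableSet.inter ?_ (ZSpan.fundamentalDomain_measurableSet (bOf B hB))
    exact MeasurableSet.iUnion fun i => MeasurableSet.iUnion fun g =>
      ((hD₂m.const_vadd (v i + x)).const_vadd (↑g : Fin n → ℝ))
  have hlt : volume F < volume A₁ + volume A₂ := by
    rw [h1, h2, hFdef, vol_fd B hB]
    have hfin₁ : volume D₁ ≠ ⊤ := hD₁b.measure_lt_top.ne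
    have hfin₂ : volume D₂ ≠ ⊤ := hD₂b.measure_lt_top.ne
    have hk' : (0 : ℝ) < k := Nat.cast_pos.mpr hk
    have hreal : |B.det| < k * ((volume D₁).toReal + (volume D₂).toReal) := by
      rw [div_lt_iff₀ hk'] at hvol
      nlinarith [hvol]
    calc ENNReal.ofReal |B.det|
        < ENNReal.ofReal (k * ((volume D₁).toReal + (volume D₂).toReal)) :=
          (ENNReal.ofReal_lt_ofReal_iff_of_nonneg (abs_nonneg _)).mpr hreal
      _ = k * volume D₁ + k * volume D₂ := by
          rw [ENNReal.ofReal_mul (by positivity), ENNReal.ofReal_add ENNReal.toReal_nonneg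
            ENNReal.toReal_nonneg, ENNReal.ofReal_toReal hfin₁, ENNReal.ofReal_toReal hfin₂,
            ENNReal.ofReal_natCast, mul_add]
  have hnd : ¬ Disjoint A₁ A₂ := by
    intro hdisj
    have hu : volume (A₁ ∪ A₂) = volume A₁ + volume A₂ := measure_union hdisj hA₂m
    have hle : volume (A₁ ∪ A₂) ≤ volume F :=
      measure_mono (Set.union_subset Set.inter_subset_right Set.inter_subset_right)
    rw [hu] at hle
    exact absurd hle (not_le.mpr hlt)
  obtain ⟨y, hy₁, hy₂⟩ := Set.not_disjoint_iff.mp hnd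
  obtain ⟨hy₁', -⟩ := hy₁
  obtain ⟨hy₂', -⟩ := hy₂
  simp only [Set.mem_iUnion] at hy₁' hy₂'
  obtain ⟨i, g, z₁, ⟨d₁, hd₁, rfl⟩, hyz₁⟩ := hy₁'
  obtain ⟨j, g', z₂, ⟨d₂, hd₂, rfl⟩, hyz₂⟩ := hy₂'
  have e : (↑g : Fin n → ℝ) + ((v i + 0) + d₁) = ↑g' + ((v j + x) + d₂) :=
    hyz₁.trans hyz₂.symm
  have hx : x = (d₁ - d₂) + ((v i + ↑g) - (v j + ↑g')) := by
    have e2 : (↑g : Fin n → ℝ) + ((v i + 0) + d₁) - (↑g' + (v j + d₂)) = x := by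
      rw [e]; abel
    rw [← e2]; abel
  rw [hx]
  exact Set.add_mem_add (Set.sub_mem_sub hd₁ hd₂)
    (Set.sub_mem_sub (hmemV i g) (hmemV j g'))
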